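/- For every prime p, the zero-divisor graphs Γ(N_{p²}), Γ(N_{p,p}), Γ(A_p), Γ(A_p⁰), and Γ(N_{0,p} ⊕ ℤ_p) are pairwise isomorphic. -/

import Mathlib

/-- An element of a ring is a (one-sided or two-sided) zero-divisor: it is nonzero and
kills some nonzero element on the left or on the right. -/
def IsZD {R : Type*} [NonUnitalNonAssocRing R] (x : R) : Prop :=
  x ≠ 0 ∧ ∃ y : R, y ≠ 0 ∧ (x * y = 0 ∨ y * x = 0)

/-- The zero-divisor graph `Γ(R)` of a ring `R`: vertices are the nonzero zero-divisors,
and distinct vertices `x`, `y` are adjacent iff `x*y = 0` or `y*x = 0`. -/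
def zdvGraph (R : Type*) [NonUnitalNonAssocRing R] :
    SimpleGraph {x : R // IsZD x} where
  Adj a b := a ≠ b ∧ ((a : R) * (b : R) = 0 ∨ (b : R) * (a : R) = 0)
  symm := by
    constructor
    rintro a b ⟨hne, h⟩
    exact ⟨hne.symm, h.symm⟩
  loopless := by
    constructor
    rintro a ⟨hne, -⟩
    exact hne rfl

/-- A variety of (associative, not necessarily unital or commutative) rings: a class of
rings closed under isomorphisms, subrings, homomorphic images and arbitrary products. -/
structure RingVariety : Type 1 where
  mem : ∀ (R : Type) [NonUnitalRing R], Prop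
  closed_iso : ∀ (R S : Type) [NonUnitalRing R] [NonUnitalRing S],
    (R ≃+* S) → mem R → mem S
  closed_subring : ∀ (R : Type) [NonUnitalRing R] (S : NonUnitalSubring R),
    mem R → mem S
  closed_image : ∀ (R S : Type) [NonUnitalRing R] [NonUnitalRing S] (f : R →ₙ+* S),
    Function.Surjective f → mem R → mem S
  closed_prod : ∀ (ι : Type) (R : ι → Type) [∀ i, NonUnitalRing (R i)],
    (∀ i, mem (R i)) → mem (∀ i, R i)

/-- A variety is graph-determined if any two finite rings in it with isomorphic
zero-divisor graphs are isomorphic. -/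
def GraphDetermined (M : RingVariety) : Prop :=
  ∀ (R S : Type) [NonUnitalRing R] [NonUnitalRing S], Finite R → Finite S →
    M.mem R → M.mem S →
    Nonempty (zdvGraph R ≃g zdvGraph S) → Nonempty (R ≃+* S)

/-- The null ring on an abelian group `A`: all products are zero. -/
def NullRing (A : Type*) := A

instance {A : Type*} [AddCommGroup A] : NonUnitalRing (NullRing A) :=
  { (inferInstance : AddCommGroup A) with
    mul := fun _ _ => (0 : A)
    left_distrib := fun _ _ _ => (add_zero (0 : A)).symm
    right_distrib := fun _ _ _ => (add_zero (0 : A)).symm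
    zero_mul := fun _ => rfl
    mul_zero := fun _ => rfl
    mul_assoc := fun _ _ _ => rfl }

/-- The ring `N_{p²}`: the additive group `ℤ/p²ℤ` equipped with the multiplication
`x ∘ y = p·x·y`. -/
def Npsq (p : ℕ) := ZMod (p ^ 2)

namespace Npsq

/-- The identity map from `N_{p²}` to its underlying additive group `ℤ/p²ℤ`. -/
def zc {p : ℕ} (x : Npsq p) : ZMod (p ^ 2) := x

instance (p : ℕ) : NonUnitalRing (Npsq p) :=
  { (inferInstance : AddCommGroup (ZMod (p ^ 2))) with
    mul := fun a b => ((p : ZMod (p ^ 2)) * zc a * zc b : ZMod (p ^ 2))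
    left_distrib := fun a b c => by
      show (p : ZMod (p ^ 2)) * zc a * (zc b + zc c)
          = (p : ZMod (p ^ 2)) * zc a * zc b + (p : ZMod (p ^ 2)) * zc a * zc c
      ring
    right_distrib := fun a b c => by
      show (p : ZMod (p ^ 2)) * (zc a + zc b) * zc c
          = (p : ZMod (p ^ 2)) * zc a * zc c + (p : ZMod (p ^ 2)) * zc b * zc c
      ring
    zero_mul := fun a => by
      show (p : ZMod (p ^ 2)) * (0 : ZMod (p ^ 2)) * zc a = (0 : ZMod (p ^ 2))
      ring
    mul_zero := fun a => by
      show (p : ZMod (p ^ 2)) * zc a * (0 : ZMod (p ^ 2)) = (0 : ZMod (p ^ 2))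
      ring
    mul_assoc := fun a b c => by
      show (p : ZMod (p ^ 2)) * ((p : ZMod (p ^ 2)) * zc a * zc b) * zc c
          = (p : ZMod (p ^ 2)) * zc a * ((p : ZMod (p ^ 2)) * zc b * zc c)
      ring }

end Npsq

/-- `A_p`: the ring of 2×2 matrices over `GF(p)` of the form `[[a,b],[0,0]]`
(i.e. with zero second row). -/
def Ap (p : ℕ) : NonUnitalSubring (Matrix (Fin 2) (Fin 2) (ZMod p)) where
  carrier := {M | M 1 0 = 0 ∧ M 1 1 = 0}
  zero_mem' := ⟨rfl, rfl⟩
  add_mem' := by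
    rintro M N ⟨h1, h2⟩ ⟨h3, h4⟩
    exact ⟨by simp [Matrix.add_apply, h1, h3], by simp [Matrix.add_apply, h2, h4]⟩
  neg_mem' := by
    rintro M ⟨h1, h2⟩
    exact ⟨by simp [Matrix.neg_apply, h1], by simp [Matrix.neg_apply, h2]⟩
  mul_mem' := by
    rintro M N ⟨h1, h2⟩ ⟨h3, h4⟩
    constructor <;> simp [Matrix.mul_apply, Fin.sum_univ_two, h1, h2]

/-- `A_p⁰`: the ring of 2×2 matrices over `GF(p)` of the form `[[a,0],[b,0]]`
(i.e. with zero second column). -/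
def Ap0 (p : ℕ) : NonUnitalSubring (Matrix (Fin 2) (Fin 2) (ZMod p)) where
  carrier := {M | M 0 1 = 0 ∧ M 1 1 = 0}
  zero_mem' := ⟨rfl, rfl⟩
  add_mem' := by
    rintro M N ⟨h1, h2⟩ ⟨h3, h4⟩
    exact ⟨by simp [Matrix.add_apply, h1, h3], by simp [Matrix.add_apply, h2, h4]⟩
  neg_mem' := by
    rintro M ⟨h1, h2⟩
    exact ⟨by simp [Matrix.neg_apply, h1], by simp [Matrix.neg_apply, h2]⟩
  mul_mem' := by
    rintro M N ⟨h1, h2⟩ ⟨h3, h4⟩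
    constructor <;> simp [Matrix.mul_apply, Fin.sum_univ_two, h1, h3, h4]

/-- `N_{p,p}`: the ring of 3×3 matrices over `GF(p)` of the form
`[[0,a,b],[0,0,a],[0,0,0]]` with `a, b ∈ GF(p)`. -/
def Npp (p : ℕ) : NonUnitalSubring (Matrix (Fin 3) (Fin 3) (ZMod p)) where
  carrier := {M | M 0 0 = 0 ∧ M 1 0 = 0 ∧ M 1 1 = 0 ∧ M 2 0 = 0 ∧ M 2 1 = 0 ∧
    M 2 2 = 0 ∧ M 1 2 = M 0 1}
  zero_mem' := ⟨rfl, rfl, rfl, rfl, rfl, rfl, rfl⟩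
  add_mem' := by
    rintro M N ⟨h1, h2, h3, h4, h5, h6, h7⟩ ⟨g1, g2, g3, g4, g5, g6, g7⟩
    refine ⟨?_, ?_, ?_, ?_, ?_, ?_, ?_⟩ <;>
      simp [Matrix.add_apply, h1, h2, h3, h4, h5, h6, h7, g1, g2, g3, g4, g5, g6, g7]
  neg_mem' := by
    rintro M ⟨h1, h2, h3, h4, h5, h6, h7⟩
    refine ⟨?_, ?_, ?_, ?_, ?_, ?_, ?_⟩ <;>
      simp [Matrix.neg_apply, h1, h2, h3, h4, h5, h6, h7]
  mul_mem' := by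
    rintro M N ⟨h1, h2, h3, h4, h5, h6, h7⟩ ⟨g1, g2, g3, g4, g5, g6, g7⟩
    refine ⟨?_, ?_, ?_, ?_, ?_, ?_, ?_⟩ <;>
      simp [Matrix.mul_apply, Fin.sum_univ_three, h1, h2, h3, h4, h5, h6, h7,
        g1, g2, g3, g4, g5, g6, g7]

section helper
variable {R S : Type*} [NonUnitalNonAssocRing R] [NonUnitalNonAssocRing S]

def zdvIsoOfEquiv (e : R ≃ S) (h0 : ∀ x, e x = 0 ↔ x = 0)
    (hm : ∀ x y : R, (x * y = 0 ∨ y * x = 0) ↔ (e x * e y = 0 ∨ e y * e x = 0)) :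
    zdvGraph R ≃g zdvGraph S where
  toEquiv := e.subtypeEquiv (fun x => by
    constructor
    · rintro ⟨hx, y, hy, h⟩
      exact ⟨fun h' => hx ((h0 x).mp h'), e y, fun h' => hy ((h0 y).mp h'), (hm x y).mp h⟩
    · rintro ⟨hx, y, hy, h⟩
      refine ⟨fun h' => hx (by rw [h', (h0 0).mpr rfl]), e.symm y, fun h' => hy ?_, ?_⟩
      · rw [← e.apply_symm_apply y, h', (h0 0).mpr rfl]
      · rw [← e.apply_symm_apply y] at h
        exact (hm x (e.symm y)).mpr h)
  map_rel_iff' := by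
    rintro ⟨a, ha⟩ ⟨b, hb⟩
    show (_ ≠ _ ∧ _) ↔ (_ ≠ _ ∧ _)
    rw [Ne, Ne, Subtype.ext_iff, Subtype.ext_iff]
    simp only [Equiv.subtypeEquiv_apply]
    rw [e.apply_eq_iff_eq]
    exact and_congr Iff.rfl (hm a b).symm

end helper

def toNull {A : Type*} (a : A) : NullRing A := a
def ofNull {A : Type*} (a : NullRing A) : A := a


section npsq
variable (p : ℕ) (hp : p.Prime)

/-- explicit equivalence -/
def npsqEquiv (hp : p.Prime) : Npsq p ≃ NullRing (ZMod p) × ZMod p where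
  toFun x := (toNull (((Npsq.zc x).val / p : ℕ) : ZMod p), (((Npsq.zc x).val : ℕ) : ZMod p))
  invFun y := ((((ofNull y.1).val * p + y.2.val : ℕ) : ZMod (p^2)) : Npsq p)
  left_inv x := by
    haveI : Fact p.Prime := ⟨hp⟩
    haveI : NeZero (p^2) := ⟨pow_ne_zero 2 hp.ne_zero⟩
    have hv : (Npsq.zc x).val < p^2 := ZMod.val_lt _
    have h1 : (Npsq.zc x).val / p < p := Nat.div_lt_of_lt_mul (by rwa [← sq])
    show ((((((Npsq.zc x).val / p : ℕ) : ZMod p).val * p + (((Npsq.zc x).val : ℕ) : ZMod p).val : ℕ) : ZMod (p^2)) : Npsq p) = x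
    rw [ZMod.val_natCast_of_lt h1, ZMod.val_natCast, Nat.div_add_mod']
    exact ZMod.natCast_zmod_val x
  right_inv y := by
    haveI : Fact p.Prime := ⟨hp⟩
    haveI : NeZero (p^2) := ⟨pow_ne_zero 2 hp.ne_zero⟩
    obtain ⟨a, b⟩ := y
    have ha : (ofNull a).val < p := ZMod.val_lt _
    have hb : b.val < p := ZMod.val_lt _
    have hlt : (ofNull a).val * p + b.val < p ^ 2 := by
      rw [sq]; nlinarith
    have hval : (Npsq.zc ((((ofNull a).val * p + b.val : ℕ) : ZMod (p^2)) : Npsq p)).val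
        = (ofNull a).val * p + b.val := ZMod.val_natCast_of_lt hlt
    refine Prod.ext ?_ ?_
    · show toNull ((((Npsq.zc _).val / p : ℕ) : ZMod p)) = a
      rw [hval]
      have hdiv : ((ofNull a).val * p + b.val) / p = (ofNull a).val := by
        rw [mul_comm, Nat.mul_add_div hp.pos, Nat.div_eq_of_lt hb, add_zero]
      rw [hdiv]
      show toNull (((ofNull a).val : ℕ) : ZMod p) = a
      unfold toNull ofNull
      exact ZMod.natCast_zmod_val a
    · show ((((Npsq.zc _).val : ℕ)) : ZMod p) = b
      rw [hval]
      push_cast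
      simp [ZMod.natCast_self, ZMod.natCast_zmod_val]
end npsq

section npsq2
variable {p : ℕ}

lemma npsq_mul_def (p : ℕ) (x y : Npsq p) :
    Npsq.zc (x * y) = (p : ZMod (p^2)) * Npsq.zc x * Npsq.zc y := rfl

lemma npsq_mul_zero_iff (hp : p.Prime) (x y : Npsq p) :
    x * y = 0 ↔ (p ∣ (Npsq.zc x).val ∨ p ∣ (Npsq.zc y).val) := by
  haveI : NeZero (p^2) := ⟨pow_ne_zero 2 hp.ne_zero⟩
  have hxy : Npsq.zc (x * y) = ((p * (Npsq.zc x).val * (Npsq.zc y).val : ℕ) : ZMod (p^2)) := by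
    rw [npsq_mul_def]
    push_cast
    rw [ZMod.natCast_zmod_val, ZMod.natCast_zmod_val]
  have key : ∀ a b : ℕ, (p^2 ∣ p * (a * b) ↔ p ∣ a ∨ p ∣ b) := by
    intro a b
    rw [sq, Nat.mul_dvd_mul_iff_left hp.pos, hp.dvd_mul]
  rw [show (x * y = 0) ↔ (Npsq.zc (x * y) = 0) from Iff.rfl, hxy,
    ZMod.natCast_eq_zero_iff, mul_assoc, key]

lemma npsqEquiv_map_zero (hp : p.Prime) : npsqEquiv p hp 0 = 0 := by
  haveI : NeZero (p^2) := ⟨pow_ne_zero 2 hp.ne_zero⟩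
  show (toNull (((Npsq.zc (0:Npsq p)).val / p : ℕ) : ZMod p),
      (((Npsq.zc (0:Npsq p)).val : ℕ) : ZMod p)) = (0, 0)
  have h0 : (Npsq.zc (0 : Npsq p)).val = 0 := ZMod.val_zero
  rw [h0]
  simp [toNull]
  rfl

lemma npsqEquiv_zero_iff (hp : p.Prime) (x : Npsq p) :
    npsqEquiv p hp x = 0 ↔ x = 0 :=
  ⟨fun h => (npsqEquiv p hp).injective (h.trans (npsqEquiv_map_zero hp).symm),
   fun h => h ▸ npsqEquiv_map_zero hp⟩
lemma npsqEquiv_snd (hp : p.Prime) (x : Npsq p) :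
    ((npsqEquiv p hp x).2 = 0) ↔ p ∣ (Npsq.zc x).val := by
  show ((((Npsq.zc x).val : ℕ) : ZMod p) = 0) ↔ _
  exact ZMod.natCast_eq_zero_iff _ _

end npsq2

section prodring
variable {p : ℕ}

lemma prod_mul_zero_iff (hp : p.Prime) (u v : NullRing (ZMod p) × ZMod p) :
    u * v = 0 ↔ (u.2 = 0 ∨ v.2 = 0) := by
  haveI : Fact p.Prime := ⟨hp⟩
  rw [Prod.ext_iff]
  have h1 : (u * v).1 = 0 := rfl
  have h2 : (u * v).2 = u.2 * v.2 := rfl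
  rw [h1, h2]
  simp [mul_eq_zero]

lemma prod_cond (hp : p.Prime) (u v : NullRing (ZMod p) × ZMod p) :
    (u * v = 0 ∨ v * u = 0) ↔ (u.2 = 0 ∨ v.2 = 0) := by
  rw [prod_mul_zero_iff hp, prod_mul_zero_iff hp]
  tauto

lemma npsq_cond (hp : p.Prime) (x y : Npsq p) :
    (x * y = 0 ∨ y * x = 0) ↔
      ((npsqEquiv p hp x).2 = 0 ∨ (npsqEquiv p hp y).2 = 0) := by
  rw [npsq_mul_zero_iff hp, npsq_mul_zero_iff hp, npsqEquiv_snd hp, npsqEquiv_snd hp]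
  tauto
end prodring

section matrings
variable {p : ℕ}

lemma ap_mem (x : Ap p) : x.val 1 0 = 0 ∧ x.val 1 1 = 0 := x.2

def apEquiv (p : ℕ) : Ap p ≃ NullRing (ZMod p) × ZMod p where
  toFun x := (toNull (x.val 0 1), x.val 0 0)
  invFun y := ⟨!![y.2, ofNull y.1; 0, 0], by constructor <;> simp⟩
  left_inv x := by
    obtain ⟨h1, h2⟩ := x.2
    apply Subtype.ext
    ext i j
    fin_cases i <;> fin_cases j <;> simp [toNull, ofNull, h1, h2]
  right_inv y := by
    apply Prod.ext <;> simp [toNull, ofNull]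

lemma apEquiv_zero_iff (x : Ap p) : apEquiv p x = 0 ↔ x = 0 := by
  obtain ⟨h1, h2⟩ := x.2
  rw [Prod.ext_iff]
  constructor
  · rintro ⟨ha, hb⟩
    apply Subtype.ext
    ext i j
    have ha' : x.val 0 1 = 0 := ha
    have hb' : x.val 0 0 = 0 := hb
    fin_cases i <;> fin_cases j <;> simp [h1, h2, ha', hb']
  · rintro rfl
    exact ⟨rfl, rfl⟩

lemma ap_cond (hp : p.Prime) (x y : Ap p) :
    (x * y = 0 ∨ y * x = 0) ↔ ((apEquiv p x).2 = 0 ∨ (apEquiv p y).2 = 0) := by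
  haveI : Fact p.Prime := ⟨hp⟩
  obtain ⟨h1, h2⟩ := x.2
  obtain ⟨g1, g2⟩ := y.2
  show (x * y = 0 ∨ y * x = 0) ↔ (x.val 0 0 = 0 ∨ y.val 0 0 = 0)
  have hmul : ∀ a b : Ap p, (a * b = 0) ↔ (a.val * b.val = 0) := fun a b =>
    Iff.trans Subtype.ext_iff Iff.rfl
  constructor
  · rintro (h | h)
    · rw [hmul] at h
      have := congrFun (congrFun h 0) 0
      rw [Matrix.mul_apply, Fin.sum_univ_two] at this
      simp [g1] at this
      tauto
    · rw [hmul] at h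
      have := congrFun (congrFun h 0) 0
      rw [Matrix.mul_apply, Fin.sum_univ_two] at this
      simp [h1] at this
      tauto
  · rintro (h | h)
    · left
      rw [hmul]
      ext i j
      fin_cases i <;> fin_cases j <;>
        simp [Matrix.mul_apply, Fin.sum_univ_two, h, h1, h2, g1, g2]
    · right
      rw [hmul]
      ext i j
      fin_cases i <;> fin_cases j <;>
        simp [Matrix.mul_apply, Fin.sum_univ_two, h, h1, h2, g1, g2]

end matrings

section matrings2
variable {p : ℕ}

def ap0Equiv (p : ℕ) : Ap0 p ≃ NullRing (ZMod p) × ZMod p where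
  toFun x := (toNull (x.val 1 0), x.val 0 0)
  invFun y := ⟨!![y.2, 0; ofNull y.1, 0], by constructor <;> simp⟩
  left_inv x := by
    obtain ⟨h1, h2⟩ := x.2
    apply Subtype.ext
    ext i j
    fin_cases i <;> fin_cases j <;> simp [toNull, ofNull, h1, h2]
  right_inv y := by
    apply Prod.ext <;> simp [toNull, ofNull]

lemma ap0Equiv_zero_iff (x : Ap0 p) : ap0Equiv p x = 0 ↔ x = 0 := by
  obtain ⟨h1, h2⟩ := x.2
  rw [Prod.ext_iff]
  constructor
  · rintro ⟨ha, hb⟩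
    apply Subtype.ext
    ext i j
    have ha' : x.val 1 0 = 0 := ha
    have hb' : x.val 0 0 = 0 := hb
    fin_cases i <;> fin_cases j <;> simp [h1, h2, ha', hb']
  · rintro rfl
    exact ⟨rfl, rfl⟩

lemma ap0_cond (hp : p.Prime) (x y : Ap0 p) :
    (x * y = 0 ∨ y * x = 0) ↔ ((ap0Equiv p x).2 = 0 ∨ (ap0Equiv p y).2 = 0) := by
  haveI : Fact p.Prime := ⟨hp⟩
  obtain ⟨h1, h2⟩ := x.2
  obtain ⟨g1, g2⟩ := y.2
  show (x * y = 0 ∨ y * x = 0) ↔ (x.val 0 0 = 0 ∨ y.val 0 0 = 0)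
  have hmul : ∀ a b : Ap0 p, (a * b = 0) ↔ (a.val * b.val = 0) := fun a b =>
    Iff.trans Subtype.ext_iff Iff.rfl
  constructor
  · rintro (h | h)
    · rw [hmul] at h
      have := congrFun (congrFun h 0) 0
      rw [Matrix.mul_apply, Fin.sum_univ_two] at this
      simp [h1, g1] at this
      tauto
    · rw [hmul] at h
      have := congrFun (congrFun h 0) 0
      rw [Matrix.mul_apply, Fin.sum_univ_two] at this
      simp [h1, g1] at this
      tauto
  · rintro (h | h)
    · right
      rw [hmul]
      ext i j
      fin_cases i <;> fin_cases j <;>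
        simp [Matrix.mul_apply, Fin.sum_univ_two, h, h1, h2, g1, g2]
    · left
      rw [hmul]
      ext i j
      fin_cases i <;> fin_cases j <;>
        simp [Matrix.mul_apply, Fin.sum_univ_two, h, h1, h2, g1, g2]

lemma npp_mem (x : Npp p) : x.val 0 0 = 0 ∧ x.val 1 0 = 0 ∧ x.val 1 1 = 0 ∧
    x.val 2 0 = 0 ∧ x.val 2 1 = 0 ∧ x.val 2 2 = 0 ∧ x.val 1 2 = x.val 0 1 := x.2

def nppEquiv (p : ℕ) : Npp p ≃ NullRing (ZMod p) × ZMod p where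
  toFun x := (toNull (x.val 0 2), x.val 0 1)
  invFun y := ⟨!![0, y.2, ofNull y.1; 0, 0, y.2; 0, 0, 0], by
    refine ⟨?_, ?_, ?_, ?_, ?_, ?_, ?_⟩ <;> simp [Matrix.vecHead, Matrix.vecTail]⟩
  left_inv x := by
    obtain ⟨h1, h2, h3, h4, h5, h6, h7⟩ := x.2
    apply Subtype.ext
    ext i j
    fin_cases i <;> fin_cases j <;> simp [Matrix.vecHead, Matrix.vecTail, toNull, ofNull, h1, h2, h3, h4, h5, h6, h7]
  right_inv y := by
    apply Prod.ext <;> simp [toNull, ofNull]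

lemma nppEquiv_zero_iff (x : Npp p) : nppEquiv p x = 0 ↔ x = 0 := by
  obtain ⟨h1, h2, h3, h4, h5, h6, h7⟩ := x.2
  rw [Prod.ext_iff]
  constructor
  · rintro ⟨ha, hb⟩
    apply Subtype.ext
    ext i j
    have ha' : x.val 0 2 = 0 := ha
    have hb' : x.val 0 1 = 0 := hb
    fin_cases i <;> fin_cases j <;> simp [h1, h2, h3, h4, h5, h6, h7, ha', hb']
  · rintro rfl
    exact ⟨rfl, rfl⟩

lemma npp_cond (hp : p.Prime) (x y : Npp p) :
    (x * y = 0 ∨ y * x = 0) ↔ ((nppEquiv p x).2 = 0 ∨ (nppEquiv p y).2 = 0) := by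
  haveI : Fact p.Prime := ⟨hp⟩
  obtain ⟨h1, h2, h3, h4, h5, h6, h7⟩ := x.2
  obtain ⟨g1, g2, g3, g4, g5, g6, g7⟩ := y.2
  show (x * y = 0 ∨ y * x = 0) ↔ (x.val 0 1 = 0 ∨ y.val 0 1 = 0)
  have hmul : ∀ a b : Npp p, (a * b = 0) ↔ (a.val * b.val = 0) := fun a b =>
    Iff.trans Subtype.ext_iff Iff.rfl
  constructor
  · rintro (h | h)
    · rw [hmul] at h
      have := congrFun (congrFun h 0) 2
      rw [Matrix.mul_apply, Fin.sum_univ_three] at this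
      simp [h1, h2, h3, h4, h5, h6, h7, g1, g2, g3, g4, g5, g6, g7] at this
      tauto
    · rw [hmul] at h
      have := congrFun (congrFun h 0) 2
      rw [Matrix.mul_apply, Fin.sum_univ_three] at this
      simp [h1, h2, h3, h4, h5, h6, h7, g1, g2, g3, g4, g5, g6, g7] at this
      tauto
  · rintro (h | h)
    · left
      rw [hmul]
      ext i j
      fin_cases i <;> fin_cases j <;>
        simp [Matrix.mul_apply, Fin.sum_univ_three, h, h1, h2, h3, h4, h5, h6, h7,
          g1, g2, g3, g4, g5, g6, g7]
    · left
      rw [hmul]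
      ext i j
      fin_cases i <;> fin_cases j <;>
        simp [Matrix.mul_apply, Fin.sum_univ_three, h, h1, h2, h3, h4, h5, h6, h7,
          g1, g2, g3, g4, g5, g6, g7]

end matrings2

section main
variable {p : ℕ}

def isoNpsq (hp : p.Prime) : zdvGraph (Npsq p) ≃g zdvGraph (NullRing (ZMod p) × ZMod p) :=
  zdvIsoOfEquiv (npsqEquiv p hp) (fun x => npsqEquiv_zero_iff hp x)
    (fun x y => (npsq_cond hp x y).trans (prod_cond hp _ _).symm)

def isoNpp (hp : p.Prime) : zdvGraph (Npp p) ≃g zdvGraph (NullRing (ZMod p) × ZMod p) :=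
  zdvIsoOfEquiv (nppEquiv p) (fun x => nppEquiv_zero_iff x)
    (fun x y => (npp_cond hp x y).trans (prod_cond hp _ _).symm)

def isoAp (hp : p.Prime) : zdvGraph (Ap p) ≃g zdvGraph (NullRing (ZMod p) × ZMod p) :=
  zdvIsoOfEquiv (apEquiv p) (fun x => apEquiv_zero_iff x)
    (fun x y => (ap_cond hp x y).trans (prod_cond hp _ _).symm)

def isoAp0 (hp : p.Prime) : zdvGraph (Ap0 p) ≃g zdvGraph (NullRing (ZMod p) × ZMod p) :=
  zdvIsoOfEquiv (ap0Equiv p) (fun x => ap0Equiv_zero_iff x)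
    (fun x y => (ap0_cond hp x y).trans (prod_cond hp _ _).symm)

end main

/-- For every prime `p`, the zero-divisor graphs of `N_{p²}`, `N_{p,p}`, `A_p`, `A_p⁰`
and `N_{0,p} ⊕ ℤ_p` are pairwise isomorphic. -/
theorem zdvGraphs_pairwise_iso (p : ℕ) (hp : p.Prime) :
    Nonempty (zdvGraph (Npsq p) ≃g zdvGraph (NullRing (ZMod p) × ZMod p)) ∧
    Nonempty (zdvGraph (Npp p) ≃g zdvGraph (NullRing (ZMod p) × ZMod p)) ∧
    Nonempty (zdvGraph (Ap p) ≃g zdvGraph (NullRing (ZMod p) × ZMod p)) ∧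
    Nonempty (zdvGraph (Ap0 p) ≃g zdvGraph (NullRing (ZMod p) × ZMod p)) ∧
    Nonempty (zdvGraph (Npsq p) ≃g zdvGraph (Npp p)) ∧
    Nonempty (zdvGraph (Npsq p) ≃g zdvGraph (Ap p)) ∧
    Nonempty (zdvGraph (Npsq p) ≃g zdvGraph (Ap0 p)) ∧
    Nonempty (zdvGraph (Npp p) ≃g zdvGraph (Ap p)) ∧
    Nonempty (zdvGraph (Npp p) ≃g zdvGraph (Ap0 p)) ∧
    Nonempty (zdvGraph (Ap p) ≃g zdvGraph (Ap0 p)) := by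
  exact ⟨⟨isoNpsq hp⟩, ⟨isoNpp hp⟩, ⟨isoAp hp⟩, ⟨isoAp0 hp⟩,
    ⟨(isoNpsq hp).trans (isoNpp hp).symm⟩,
    ⟨(isoNpsq hp).trans (isoAp hp).symm⟩,
    ⟨(isoNpsq hp).trans (isoAp0 hp).symm⟩,
    ⟨(isoNpp hp).trans (isoAp hp).symm⟩,
    ⟨(isoNpp hp).trans (isoAp0 hp).symm⟩,
    ⟨(isoAp hp).trans (isoAp0 hp).symm⟩⟩
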